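/- Let y = (y_1,…,y_n) with all y_i, y_i ± y_j avoiding the singularities of the relevant trigonometric functions, and let V(y) = −∑_i [C_b ln|sin(y_i/2)| + C_a ln|cos(y_i/2)|] − 2β ∑_{i>j} [ln|sin((y_i−y_j)/2)| + ln|sin((y_i+y_j)/2)|] with C_a, C_b ≥ 0 and β ≥ 0. Then for every v ∈ ℝⁿ, vᵀ(Hess V(y))v ≥ ((C_a + C_b)/4)·|v|². In particular Hess V(y) ⪰ ((C_a+C_b)/4)·Id. -/

import Mathlib

open Real in
/-- The Hessian of the EDJ potential (given by its explicit entries) dominates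
((C_a + C_b)/4)·Id as a quadratic form. -/
theorem hessian_potential_lower_bound (n : ℕ) (β Ca Cb : ℝ)
    (hβ : 0 ≤ β) (hCa : 0 ≤ Ca) (hCb : 0 ≤ Cb) (y : Fin n → ℝ)
    (hs : ∀ i, sin (y i) ≠ 0) (hc : ∀ i, cos (y i) ≠ 0)
    (hp : ∀ i j, i ≠ j → sin (y i + y j) ≠ 0)
    (hm : ∀ i j, i ≠ j → sin (y i - y j) ≠ 0)
    (H : Matrix (Fin n) (Fin n) ℝ)
    (hdiag : ∀ i, H i i = Cb / (4 * sin (y i) ^ 2) + Ca / (4 * cos (y i) ^ 2)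
        + (β / 2) * ∑ k ∈ Finset.univ.filter (fun k => k ≠ i),
            (1 / sin (y i + y k) ^ 2 + 1 / sin (y i - y k) ^ 2))
    (hoff : ∀ i j, i ≠ j →
      H i j = (β / 2) * (1 / sin (y i + y j) ^ 2 + 1 / sin (y i - y j) ^ 2)) :
    ∀ v : Fin n → ℝ,
      ((Ca + Cb) / 4) * ∑ i, v i ^ 2 ≤ dotProduct v (H.mulVec v) := by
  intro v
  classical
  set a : Fin n → Fin n → ℝ :=
    fun i j => 1 / sin (y i + y j) ^ 2 + 1 / sin (y i - y j) ^ 2 with ha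
  set f : Fin n → Fin n → ℝ := fun i j => if i = j then 0 else a i j with hf
  have fnonneg : ∀ i j, 0 ≤ f i j := by
    intro i j
    by_cases h : i = j
    · simp [hf, h]
    · simp only [hf, if_neg h, ha]
      positivity
  have fsymm : ∀ i j, f i j = f j i := by
    intro i j
    by_cases h : i = j
    · simp [h]
    · simp only [hf, if_neg h, if_neg (Ne.symm h), ha]
      have h1 : y j + y i = y i + y j := by ring
      have h2 : sin (y j - y i) ^ 2 = sin (y i - y j) ^ 2 := by
        have : y j - y i = -(y i - y j) := by ring
        rw [this, Real.sin_neg]; ring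
      rw [h1, h2]
  set d : Fin n → ℝ :=
    fun i => Cb / (4 * sin (y i) ^ 2) + Ca / (4 * cos (y i) ^ 2) with hd
  have hHd : ∀ i, H i i = d i + (β / 2) * ∑ j, f i j := by
    intro i
    rw [hdiag i]
    congr 1
    congr 1
    rw [Finset.sum_filter]
    apply Finset.sum_congr rfl
    intro j _
    by_cases h : j = i
    · simp [hf, h]
    · simp only [hf, if_pos h, if_neg (fun heq : i = j => h heq.symm), ha]
  have inner : ∀ i ∈ Finset.univ, v i * ∑ j, H i j * v j
      = d i * v i ^ 2 + (β / 2) * ((∑ j, f i j) * v i ^ 2)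
        + (β / 2) * ∑ j, f i j * (v i * v j) := by
    intro i _
    have hsplit : ∑ j, H i j * v j
        = H i i * v i + ∑ j ∈ Finset.univ.erase i, H i j * v j := by
      exact (Finset.add_sum_erase Finset.univ (fun j => H i j * v j)
        (Finset.mem_univ i)).symm
    have hoff' : ∑ j ∈ Finset.univ.erase i, H i j * v j
        = ∑ j ∈ Finset.univ.erase i, (β / 2) * (f i j * v j) := by
      apply Finset.sum_congr rfl
      intro j hj
      have hji : j ≠ i := Finset.ne_of_mem_erase hj
      rw [hoff i j (Ne.symm hji)]
      simp [hf, Ne.symm hji]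
      ring
    have herase : ∑ j ∈ Finset.univ.erase i, f i j * v j = ∑ j, f i j * v j := by
      apply Finset.sum_erase
      simp [hf]
    rw [hsplit, hoff', hHd i, ← Finset.mul_sum, herase]
    have : v i * ∑ j, f i j * v j = ∑ j, f i j * (v i * v j) := by
      rw [Finset.mul_sum]
      apply Finset.sum_congr rfl
      intro j _; ring
    linear_combination (β / 2) * this
  have key : dotProduct v (H.mulVec v)
      = ∑ i, d i * v i ^ 2
        + (β / 2) * ∑ i, ∑ j, f i j * v i ^ 2
        + (β / 2) * ∑ i, ∑ j, f i j * (v i * v j) := by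
    have : dotProduct v (H.mulVec v) = ∑ i, v i * ∑ j, H i j * v j := by
      simp [dotProduct, Matrix.mulVec]
    rw [this, Finset.sum_congr rfl inner]
    rw [Finset.sum_add_distrib, Finset.sum_add_distrib, ← Finset.mul_sum,
      ← Finset.mul_sum]
    congr 2
    congr 1
    exact Finset.sum_congr rfl fun i _ => Finset.sum_mul ..
  have swap : ∑ i, ∑ j, f i j * v j ^ 2 = ∑ i, ∑ j, f i j * v i ^ 2 := by
    rw [Finset.sum_comm]
    exact Finset.sum_congr rfl fun i _ =>
      Finset.sum_congr rfl fun j _ => by rw [fsymm]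
  have e1 : ∑ i, ∑ j, f i j * (v i + v j) ^ 2
      = ∑ i, ∑ j, f i j * v i ^ 2 + ∑ i, ∑ j, f i j * v j ^ 2
        + 2 * ∑ i, ∑ j, f i j * (v i * v j) := by
    rw [Finset.mul_sum, ← Finset.sum_add_distrib, ← Finset.sum_add_distrib]
    apply Finset.sum_congr rfl
    intro i _
    rw [Finset.mul_sum, ← Finset.sum_add_distrib, ← Finset.sum_add_distrib]
    apply Finset.sum_congr rfl
    intro j _
    ring
  have hfull : 0 ≤ ∑ i, ∑ j, f i j * (v i + v j) ^ 2 := by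
    apply Finset.sum_nonneg
    intro i _
    apply Finset.sum_nonneg
    intro j _
    exact mul_nonneg (fnonneg i j) (sq_nonneg _)
  have hpos : 0 ≤ ∑ i, ∑ j, f i j * v i ^ 2 + ∑ i, ∑ j, f i j * (v i * v j) := by
    rw [swap] at e1
    nlinarith [hfull, e1]
  have hdlb : ∀ i ∈ Finset.univ, (Ca + Cb) / 4 * v i ^ 2 ≤ d i * v i ^ 2 := by
    intro i _
    have hs2 : 0 < sin (y i) ^ 2 :=
      lt_of_le_of_ne (sq_nonneg _) (Ne.symm (pow_ne_zero 2 (hs i)))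
    have hc2 : 0 < cos (y i) ^ 2 :=
      lt_of_le_of_ne (sq_nonneg _) (Ne.symm (pow_ne_zero 2 (hc i)))
    have hsle : sin (y i) ^ 2 ≤ 1 := sin_sq_le_one (y i)
    have hcle : cos (y i) ^ 2 ≤ 1 := cos_sq_le_one (y i)
    have h1 : Cb / 4 ≤ Cb / (4 * sin (y i) ^ 2) :=
      div_le_div_of_nonneg_left hCb (by linarith) (by linarith)
    have h2 : Ca / 4 ≤ Ca / (4 * cos (y i) ^ 2) :=
      div_le_div_of_nonneg_left hCa (by linarith) (by linarith)
    have : (Ca + Cb) / 4 ≤ d i := by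
      simp only [hd]; linarith
    exact mul_le_mul_of_nonneg_right this (sq_nonneg _)
  have hsum : (Ca + Cb) / 4 * ∑ i, v i ^ 2 ≤ ∑ i, d i * v i ^ 2 := by
    rw [Finset.mul_sum]
    exact Finset.sum_le_sum hdlb
  rw [key]
  nlinarith [mul_nonneg (by positivity : (0:ℝ) ≤ β / 2) hpos, hsum]
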